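/- Every residually finite finitely presented semigroup has decidable word problem (McKinsey's algorithm): the set of pairs of words that are equal in the semigroup is decidable, given that the semigroup is residually finite and finitely presented. -/

import Mathlib

/-- One-step rewriting (in either direction one uses `EqvGen`) by the finite
defining relations `R` on words over the finite alphabet `Fin k`. -/
def RwStep {X : Type*} (R : Set (List X × List X)) (u v : List X) : Prop :=
  ∃ l r p s : List X, (l, r) ∈ R ∧ u = p ++ l ++ s ∧ v = p ++ r ++ s

set_option maxHeartbeats 1000000

namespace McKinsey

open List Relation

variable {k : ℕ}

abbrev Cert (k : ℕ) := List (ℕ × List (Fin k) × List (Fin k) × Bool)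

def stepFold (RL : List (List (Fin k) × List (Fin k)))
    (st : Bool × List (Fin k)) (e : ℕ × List (Fin k) × List (Fin k) × Bool) :
    Bool × List (Fin k) :=
  (st.1 && decide (st.2 = e.2.1 ++ (bif e.2.2.2 then (RL.getD e.1 ([], [])).1
      else (RL.getD e.1 ([], [])).2) ++ e.2.2.1),
   e.2.1 ++ (bif e.2.2.2 then (RL.getD e.1 ([], [])).2
      else (RL.getD e.1 ([], [])).1) ++ e.2.2.1)

def certCheck (RL : List (List (Fin k) × List (Fin k))) (u v : List (Fin k))
    (c : Cert k) : Bool :=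
  (c.foldl (stepFold RL) (true, u)).1 && decide ((c.foldl (stepFold RL) (true, u)).2 = v)

def mulf (s : ℕ) (m : List ℕ) (a b : ℕ) : ℕ := m.getD (a * s + b) 0

def wordProd (s : ℕ) (m g : List ℕ) (w : List (Fin k)) : ℕ :=
  ((w.map fun x => g.getD x.val 0).tail).foldl (mulf s m)
    ((w.map fun x => g.getD x.val 0).headD 0)

def sgCheck (RL : List (List (Fin k) × List (Fin k))) (u v : List (Fin k))
    (t : ℕ × List ℕ × List ℕ) : Bool :=
  (t.2.2.all fun x => decide (x < t.1 + 1)) &&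
  (t.2.1.all fun x => decide (x < t.1 + 1)) &&
  ((List.range (t.1 + 1)).all fun a => (List.range (t.1 + 1)).all fun b =>
      (List.range (t.1 + 1)).all fun c =>
      decide (mulf (t.1 + 1) t.2.1 (mulf (t.1 + 1) t.2.1 a b) c =
        mulf (t.1 + 1) t.2.1 a (mulf (t.1 + 1) t.2.1 b c))) &&
  (RL.all fun lr => decide (wordProd (t.1 + 1) t.2.1 t.2.2 lr.1 =
      wordProd (t.1 + 1) t.2.1 t.2.2 lr.2)) &&
  (!decide (wordProd (t.1 + 1) t.2.1 t.2.2 u = wordProd (t.1 + 1) t.2.1 t.2.2 v))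

section Math

variable (R : Finset (List (Fin k) × List (Fin k)))

/-- words in the congruence class of a nonempty word are nonempty -/
theorem eqv_empty_iff
    (hR : ∀ p ∈ R, p.1 ≠ ([] : List (Fin k)) ∧ p.2 ≠ ([] : List (Fin k)))
    {a b : List (Fin k)}
    (h : EqvGen (RwStep (↑R : Set (List (Fin k) × List (Fin k)))) a b) :
    (a = [] ↔ b = []) := by
  induction h with
  | rel x y hxy =>
    obtain ⟨l, r, p, s, hmem, hx, hy⟩ := hxy
    have hl := (hR _ hmem).1
    have hr := (hR _ hmem).2
    subst hx hy
    simp_all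
  | refl => rfl
  | symm _ _ _ ih => exact ih.symm
  | trans _ _ _ _ _ ih1 ih2 => exact ih1.trans ih2

theorem foldl_false (RL : List (List (Fin k) × List (Fin k))) (c : Cert k) (w : List (Fin k)) :
    (c.foldl (stepFold RL) (false, w)).1 = false := by
  induction c generalizing w with
  | nil => rfl
  | cons e c ih => simpa [stepFold] using ih _

theorem certCheck_sound (RL : List (List (Fin k) × List (Fin k)))
    (hRL : ∀ lr ∈ RL, lr ∈ R)
    {u v : List (Fin k)} {c : Cert k} (h : certCheck RL u v c = true) :
    EqvGen (RwStep (↑R : Set (List (Fin k) × List (Fin k)))) u v := by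
  induction c generalizing u with
  | nil =>
    have : u = v := by simp [certCheck] at h; exact of_decide_eq_true h
    exact this ▸ EqvGen.refl u
  | cons e c ih =>
    simp only [certCheck, List.foldl_cons] at h
    rw [Bool.and_eq_true] at h
    rcases e with ⟨n, p, s, dir⟩
    set lr := RL.getD n ([], []) with hlr
    have hb1 : (stepFold RL (true, u) (n, p, s, dir)).1 = true := by
      by_contra hb
      rw [Bool.not_eq_true] at hb
      have heq : (stepFold RL (true, u) (n, p, s, dir)) =
          (false, (stepFold RL (true, u) (n, p, s, dir)).2) := by
        rw [← hb]
      have h1 := h.1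
      rw [heq, foldl_false] at h1
      exact absurd h1 (by simp)
    have hu : u = p ++ (bif dir then lr.1 else lr.2) ++ s := by
      have := hb1
      simp only [stepFold, Bool.true_and, decide_eq_true_eq] at this
      exact this
    have hst : stepFold RL (true, u) (n, p, s, dir) =
        (true, (p ++ (bif dir then lr.2 else lr.1)) ++ s) := by
      simp only [stepFold, ← hlr]
      rw [hu]
      simp
    have hcc : certCheck RL ((p ++ (bif dir then lr.2 else lr.1)) ++ s) v c = true := by
      unfold certCheck
      rw [Bool.and_eq_true]
      constructor
      · rw [← hst]
        exact h.1
      · have h2 := h.2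
        have h2' := of_decide_eq_true h2
        rw [hst] at h2'
        exact decide_eq_true h2'
    have h2 : EqvGen (RwStep (↑R : Set (List (Fin k) × List (Fin k))))
        ((p ++ (bif dir then lr.2 else lr.1)) ++ s) v := ih hcc
    refine EqvGen.trans _ _ _ ?_ h2
    by_cases hn : n < RL.length
    · have hmem : lr ∈ R := hRL _ (by rw [hlr, List.getD_eq_getElem _ _ hn]; exact List.getElem_mem hn)
      cases dir with
      | true =>
        exact EqvGen.rel _ _ ⟨lr.1, lr.2, p, s, hmem, by simpa using hu, by simp⟩
      | false =>
        exact EqvGen.symm _ _ <| EqvGen.rel _ _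
          ⟨lr.1, lr.2, p, s, hmem, by simp, by simpa using hu⟩
    · have : lr = ([], []) := by rw [hlr, List.getD_eq_default _ _ (not_lt.1 hn)]
      rw [this] at hu ⊢
      cases dir <;> simp only [cond_true, cond_false] at hu ⊢ <;> exact hu ▸ EqvGen.refl _

theorem certCheck_trans (RL : List (List (Fin k) × List (Fin k)))
    {u v w : List (Fin k)} {c1 c2 : Cert k}
    (h1 : certCheck RL u v c1 = true) (h2 : certCheck RL v w c2 = true) :
    certCheck RL u w (c1 ++ c2) = true := by
  simp only [certCheck, Bool.and_eq_true, decide_eq_true_eq] at h1 h2 ⊢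
  have hst : c1.foldl (stepFold RL) (true, u) = (true, v) := by
    rcases h1 with ⟨ha, hb⟩
    exact Prod.ext ha hb
  rw [List.foldl_append, hst]
  exact h2

theorem certCheck_complete (RL : List (List (Fin k) × List (Fin k)))
    (hRL : ∀ lr ∈ R, lr ∈ RL)
    {u v : List (Fin k)}
    (h : EqvGen (RwStep (↑R : Set (List (Fin k) × List (Fin k)))) u v) :
    ∃ c : Cert k, certCheck RL u v c = true := by
  have key : ∀ a b : List (Fin k),
      (RwStep (↑R : Set (List (Fin k) × List (Fin k))) a b ∨
       RwStep (↑R : Set (List (Fin k) × List (Fin k))) b a) →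
      ∃ c : Cert k, certCheck RL a b c = true := by
    rintro a b (⟨l, r, p, s, hmem, ha, hb⟩ | ⟨l, r, p, s, hmem, hb, ha⟩)
    · have hmem' : (l, r) ∈ RL := hRL _ hmem
      obtain ⟨n, hn, hget⟩ := List.mem_iff_getElem.1 hmem'
      have hgd : RL[n]? = some (l, r) := by
        rw [List.getElem?_eq_getElem hn, hget]
      exact ⟨[(n, p, s, true)], by simp [certCheck, stepFold, hgd, ha, hb]⟩
    · have hmem' : (l, r) ∈ RL := hRL _ hmem
      obtain ⟨n, hn, hget⟩ := List.mem_iff_getElem.1 hmem'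
      have hgd : RL[n]? = some (l, r) := by
        rw [List.getElem?_eq_getElem hn, hget]
      exact ⟨[(n, p, s, false)], by simp [certCheck, stepFold, hgd, ha, hb]⟩
  have hrtg : Relation.ReflTransGen
      (fun x y => RwStep (↑R : Set (List (Fin k) × List (Fin k))) x y ∨
        RwStep (↑R : Set (List (Fin k) × List (Fin k))) y x) u v := by
    clear hRL
    induction h with
    | rel x y hxy => exact Relation.ReflTransGen.single (Or.inl hxy)
    | refl => exact Relation.ReflTransGen.refl
    | symm x y _ ih =>
      haveI : Std.Symm (fun x y => RwStep (↑R : Set (List (Fin k) × List (Fin k))) x y ∨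
          RwStep (↑R : Set (List (Fin k) × List (Fin k))) y x) := ⟨fun a b hab => hab.symm⟩
      exact Std.Symm.symm _ _ ih
    | trans x y z _ _ ih1 ih2 => exact ih1.trans ih2
  clear h
  induction hrtg with
  | refl => exact ⟨[], by simp [certCheck]⟩
  | tail _ hbc ih =>
    obtain ⟨c1, hc1⟩ := ih
    obtain ⟨c2, hc2⟩ := key _ _ hbc
    exact ⟨c1 ++ c2, certCheck_trans RL hc1 hc2⟩

theorem mulf_lt {s : ℕ} {m : List ℕ} (hs : 0 < s) (hm : ∀ x ∈ m, x < s) (a b : ℕ) :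
    mulf s m a b < s := by
  unfold mulf
  rcases h : m[a * s + b]? with _ | x
  · simpa [List.getD, h] using hs
  · have := List.mem_iff_getElem?.2 ⟨_, h⟩
    simpa [List.getD, h] using hm _ this

theorem getDg_lt {s : ℕ} {g : List ℕ} (hs : 0 < s) (hg : ∀ x ∈ g, x < s) (i : ℕ) :
    g.getD i 0 < s := by
  rcases h : g[i]? with _ | x
  · simpa [List.getD, h] using hs
  · have := List.mem_iff_getElem?.2 ⟨_, h⟩
    simpa [List.getD, h] using hg _ this

theorem foldl_mulf_lt {s : ℕ} {m : List ℕ} (hs : 0 < s) (hm : ∀ x ∈ m, x < s) :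
    ∀ (lv : List ℕ) (x : ℕ), x < s → lv.foldl (mulf s m) x < s := by
  intro lv
  induction lv with
  | nil => intro x hx; exact hx
  | cons z t ih => intro x hx; exact ih _ (mulf_lt hs hm x z)

theorem foldl_mulf_assoc {s : ℕ} {m : List ℕ} (hs : 0 < s) (hm : ∀ x ∈ m, x < s)
    (hassoc : ∀ a b c, a < s → b < s → c < s →
      mulf s m (mulf s m a b) c = mulf s m a (mulf s m b c)) :
    ∀ (lv : List ℕ) (x y : ℕ), x < s → y < s → (∀ z ∈ lv, z < s) →
      lv.foldl (mulf s m) (mulf s m x y) = mulf s m x (lv.foldl (mulf s m) y) := by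
  intro lv
  induction lv with
  | nil => intro x y _ _ _; rfl
  | cons z t ih =>
    intro x y hx hy hlv
    simp only [List.foldl_cons]
    rw [hassoc x y z hx hy (hlv z List.mem_cons_self)]
    exact ih x (mulf s m y z) hx (mulf_lt hs hm y z)
      (fun z' hz' => hlv z' (List.mem_cons_of_mem _ hz'))

theorem wordProd_lt {s : ℕ} {m g : List ℕ} (hs : 0 < s) (hm : ∀ x ∈ m, x < s)
    (hg : ∀ x ∈ g, x < s) (w : List (Fin k)) (hw : w ≠ []) :
    wordProd s m g w < s := by
  rcases w with _ | ⟨x, t⟩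
  · exact absurd rfl hw
  · unfold wordProd
    simp only [List.map_cons, List.tail_cons, List.headD_cons]
    exact foldl_mulf_lt hs hm _ _ (getDg_lt hs hg _)

theorem wordProd_append {s : ℕ} {m g : List ℕ} (hs : 0 < s) (hm : ∀ x ∈ m, x < s)
    (hg : ∀ x ∈ g, x < s)
    (hassoc : ∀ a b c, a < s → b < s → c < s →
      mulf s m (mulf s m a b) c = mulf s m a (mulf s m b c))
    (w1 w2 : List (Fin k)) (h1 : w1 ≠ []) (h2 : w2 ≠ []) :
    wordProd s m g (w1 ++ w2) = mulf s m (wordProd s m g w1) (wordProd s m g w2) := by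
  rcases w1 with _ | ⟨x, t1⟩; · exact absurd rfl h1
  rcases w2 with _ | ⟨y, t2⟩; · exact absurd rfl h2
  unfold wordProd
  simp only [List.map_append, List.map_cons, List.cons_append, List.tail_cons, List.headD_cons]
  rw [show (t1.map fun x => g.getD x.val 0) ++ (g.getD y.val 0 ::
      (t2.map fun x => g.getD x.val 0)) =
      ((t1.map fun x => g.getD x.val 0) ++ [g.getD y.val 0]) ++
      (t2.map fun x => g.getD x.val 0) by simp]
  rw [List.foldl_append, List.foldl_append]
  simp only [List.foldl_cons, List.foldl_nil]
  exact (foldl_mulf_assoc hs hm hassoc _ _ _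
    (foldl_mulf_lt hs hm _ _ (getDg_lt hs hg _)) (getDg_lt hs hg _)
    (fun z hz => by
      obtain ⟨x', _, rfl⟩ := List.mem_map.1 hz
      exact getDg_lt hs hg _))

theorem wordProd_invariant (R : Finset (List (Fin k) × List (Fin k)))
    (hR : ∀ p ∈ R, p.1 ≠ ([] : List (Fin k)) ∧ p.2 ≠ ([] : List (Fin k)))
    {s : ℕ} {m g : List ℕ} (hs : 0 < s) (hm : ∀ x ∈ m, x < s)
    (hg : ∀ x ∈ g, x < s)
    (hassoc : ∀ a b c, a < s → b < s → c < s →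
      mulf s m (mulf s m a b) c = mulf s m a (mulf s m b c))
    (hrel : ∀ lr ∈ R, wordProd s m g lr.1 = wordProd s m g lr.2)
    {a b : List (Fin k)}
    (h : EqvGen (RwStep (↑R : Set (List (Fin k) × List (Fin k)))) a b) :
    wordProd s m g a = wordProd s m g b := by
  induction h with
  | rel x y hxy =>
    obtain ⟨l, r, p, s', hmem, hx, hy⟩ := hxy
    have hl := (hR _ hmem).1
    have hr := (hR _ hmem).2
    have hlr : wordProd s m g l = wordProd s m g r := hrel _ hmem
    subst hx hy
    rcases eq_or_ne p [] with rfl | hp <;> rcases eq_or_ne s' [] with rfl | hs'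
    · simpa using hlr
    · simp only [List.nil_append]
      rw [wordProd_append hs hm hg hassoc _ _ hl hs',
        wordProd_append hs hm hg hassoc _ _ hr hs', hlr]
    · simp only [List.append_nil]
      rw [wordProd_append hs hm hg hassoc _ _ hp hl,
        wordProd_append hs hm hg hassoc _ _ hp hr, hlr]
    · rw [List.append_assoc, List.append_assoc,
        wordProd_append hs hm hg hassoc _ _ hp (by simp [hl]),
        wordProd_append hs hm hg hassoc _ _ hp (by simp [hr]),
        wordProd_append hs hm hg hassoc _ _ hl hs',
        wordProd_append hs hm hg hassoc _ _ hr hs', hlr]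
  | refl => rfl
  | symm _ _ _ ih => exact ih.symm
  | trans _ _ _ _ _ ih1 ih2 => exact ih1.trans ih2

theorem sgCheck_sound (R : Finset (List (Fin k) × List (Fin k)))
    (RL : List (List (Fin k) × List (Fin k))) (hRL : ∀ lr ∈ R, lr ∈ RL)
    (hR : ∀ p ∈ R, p.1 ≠ ([] : List (Fin k)) ∧ p.2 ≠ ([] : List (Fin k)))
    {u v : List (Fin k)} {t : ℕ × List ℕ × List ℕ}
    (h : sgCheck RL u v t = true) :
    ¬ EqvGen (RwStep (↑R : Set (List (Fin k) × List (Fin k)))) u v := by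
  obtain ⟨⟨⟨⟨hg, hm⟩, hassoc⟩, hrel⟩, hne⟩ := by
    simpa only [sgCheck, Bool.and_eq_true] using h
  simp only [List.all_eq_true, decide_eq_true_eq, List.mem_range] at hg hm hassoc hrel
  rw [Bool.not_eq_eq_eq_not, Bool.not_true, decide_eq_false_iff_not] at hne
  intro heqv
  exact hne (wordProd_invariant R hR (Nat.succ_pos _) hm hg
    (fun a b c ha hb hc => hassoc a ha b hb c hc)
    (fun lr hlr => hrel lr (hRL _ hlr)) heqv)

theorem sgCheck_complete (R : Finset (List (Fin k) × List (Fin k)))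
    (RL : List (List (Fin k) × List (Fin k))) (hRL : ∀ lr ∈ RL, lr ∈ R)
    (hR : ∀ p ∈ R, p.1 ≠ ([] : List (Fin k)) ∧ p.2 ≠ ([] : List (Fin k)))
    {u v : List (Fin k)} (hu : u ≠ []) (hv : v ≠ [])
    (N : ℕ) (mul : Fin (N + 1) → Fin (N + 1) → Fin (N + 1))
    (φ : List (Fin k) → Fin (N + 1))
    (hassoc : ∀ a b c, mul (mul a b) c = mul a (mul b c))
    (hhom : ∀ a b : List (Fin k), a ≠ [] → b ≠ [] → φ (a ++ b) = mul (φ a) (φ b))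
    (hcong : ∀ a b : List (Fin k),
      EqvGen (RwStep (↑R : Set (List (Fin k) × List (Fin k)))) a b → φ a = φ b)
    (hsep : φ u ≠ φ v) :
    ∃ t : ℕ × List ℕ × List ℕ, sgCheck RL u v t = true := by
  have hs : 0 < N + 1 := Nat.succ_pos N
  set g : List ℕ := (List.finRange k).map (fun j => (φ [j]).val) with hgdef
  set m : List ℕ := (List.range ((N + 1) * (N + 1))).map
    (fun i => (mul ⟨i / (N + 1) % (N + 1), Nat.mod_lt _ hs⟩ ⟨i % (N + 1), Nat.mod_lt _ hs⟩).val) with hmdef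
  have hglt : ∀ x ∈ g, x < (N + 1) := by
    intro x hx
    obtain ⟨j, _, rfl⟩ := List.mem_map.1 hx
    exact (φ [j]).isLt
  have hmlt : ∀ x ∈ m, x < (N + 1) := by
    intro x hx
    obtain ⟨i, _, rfl⟩ := List.mem_map.1 hx
    exact (mul _ _).isLt
  have hgval : ∀ x : Fin k, g.getD x.val 0 = (φ [x]).val := by
    intro x
    have hlen : x.val < g.length := by simp [hgdef, x.isLt]
    rw [List.getD_eq_getElem _ _ hlen]
    simp [hgdef]
  have hmval : ∀ a b : Fin (N + 1), mulf (N + 1) m a.val b.val = (mul a b).val := by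
    intro a b
    have hidx : a.val * (N + 1) + b.val < (N + 1) * (N + 1) := by
      calc a.val * (N + 1) + b.val < a.val * (N + 1) + (N + 1) := by omega
        _ = (a.val + 1) * (N + 1) := by ring
        _ ≤ (N + 1) * (N + 1) := Nat.mul_le_mul_right _ (by omega)
    have hlen : a.val * (N + 1) + b.val < m.length := by simpa [hmdef] using hidx
    unfold mulf
    rw [List.getD_eq_getElem _ _ hlen]
    simp only [hmdef, List.getElem_map, List.getElem_range]
    have hdiv : (a.val * (N + 1) + b.val) / (N + 1) = a.val := by
      rw [Nat.mul_comm a.val (N + 1), Nat.mul_add_div hs, Nat.div_eq_of_lt b.isLt, Nat.add_zero]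
    have hmod : (a.val * (N + 1) + b.val) % (N + 1) = b.val := by
      rw [Nat.mul_comm a.val (N + 1), Nat.mul_add_mod, Nat.mod_eq_of_lt b.isLt]
    congr 1 <;> apply Fin.ext <;> simp [hdiv, hmod, Nat.mod_eq_of_lt a.isLt, Nat.mod_eq_of_lt b.isLt]
  have hassoc' : ∀ a b c, a < (N + 1) → b < (N + 1) → c < (N + 1) →
      mulf (N + 1) m (mulf (N + 1) m a b) c = mulf (N + 1) m a (mulf (N + 1) m b c) := by
    intro a b c ha hb hc
    have := congrArg Fin.val (hassoc ⟨a, ha⟩ ⟨b, hb⟩ ⟨c, hc⟩)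
    rwa [← hmval, ← hmval, ← hmval, ← hmval] at this
  have hwp : ∀ w : List (Fin k), w ≠ [] → wordProd (N + 1) m g w = (φ w).val := by
    intro w
    induction w with
    | nil => intro h; exact absurd rfl h
    | cons x t ih =>
      intro _
      rcases eq_or_ne t [] with rfl | ht
      · show wordProd (N + 1) m g [x] = _
        unfold wordProd
        simpa using hgval x
      · have h1 : wordProd (N + 1) m g ([x] ++ t) =
            mulf (N + 1) m (wordProd (N + 1) m g [x]) (wordProd (N + 1) m g t) :=
          wordProd_append hs hmlt hglt hassoc' [x] t (by simp) ht
        have h2 : wordProd (N + 1) m g [x] = (φ [x]).val := by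
          unfold wordProd; simpa using hgval x
        rw [show x :: t = [x] ++ t from rfl, h1, h2, ih ht, hmval, ← hhom [x] t (by simp) ht]
  refine ⟨(N, m, g), ?_⟩
  simp only [sgCheck, Bool.and_eq_true, List.all_eq_true, decide_eq_true_eq,
    List.mem_range, Bool.not_eq_eq_eq_not, Bool.not_true, decide_eq_false_iff_not]
  refine ⟨⟨⟨⟨fun x hx => hglt x hx, fun x hx => hmlt x hx⟩, ?_⟩, ?_⟩, ?_⟩
  · intro a ha b hb c hc
    exact hassoc' a b c ha hb hc
  · intro lr hlr
    have hmem := hRL _ hlr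
    have hl := (hR _ hmem).1
    have hr := (hR _ hmem).2
    rw [hwp _ hl, hwp _ hr]
    congr 1
    exact hcong _ _ (EqvGen.rel _ _ ⟨lr.1, lr.2, [], [], by simpa using hmem, by simp, by simp⟩)
  · rw [hwp _ hu, hwp _ hv]
    exact fun hc => hsep (Fin.ext hc)

end Math

section Comp

theorem foldl_and_eq {β : Type*} (p : β → Bool) :
    ∀ (l : List β) (b : Bool), l.foldl (fun r x => r && p x) b = (b && l.all p) := by
  intro l
  induction l with
  | nil => intro b; simp
  | cons x t ih => intro b; rw [List.foldl_cons, ih, List.all_cons, Bool.and_assoc]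

theorem primrec_list_all {α β : Type*} [Primcodable α] [Primcodable β]
    {f : α → List β} {p : α → β → Bool} (hf : Primrec f) (hp : Primrec₂ p) :
    Primrec fun a => (f a).all (p a) := by
  have hh : Primrec₂ (fun a (q : Bool × β) => q.1 && p a q.2) :=
    ((Primrec.dom_bool₂ (· && ·)).comp (Primrec.fst.comp Primrec.snd)
      (hp.comp Primrec.fst (Primrec.snd.comp Primrec.snd))).to₂
  have h := Primrec.list_foldl hf (Primrec.const true) hh
  exact h.of_eq fun a => by simp [foldl_and_eq]

variable (RL : List (List (Fin k) × List (Fin k)))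

theorem stepFold_primrec : Primrec₂ (stepFold RL) := by
  have hst1 : Primrec fun x : (Bool × List (Fin k)) × (ℕ × List (Fin k) × List (Fin k) × Bool) =>
      x.1.1 := Primrec.fst.comp Primrec.fst
  have hst2 : Primrec fun x : (Bool × List (Fin k)) × (ℕ × List (Fin k) × List (Fin k) × Bool) =>
      x.1.2 := Primrec.snd.comp Primrec.fst
  have hn : Primrec fun x : (Bool × List (Fin k)) × (ℕ × List (Fin k) × List (Fin k) × Bool) =>
      x.2.1 := Primrec.fst.comp Primrec.snd
  have hp : Primrec fun x : (Bool × List (Fin k)) × (ℕ × List (Fin k) × List (Fin k) × Bool) =>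
      x.2.2.1 := Primrec.fst.comp (Primrec.snd.comp Primrec.snd)
  have hs' : Primrec fun x : (Bool × List (Fin k)) × (ℕ × List (Fin k) × List (Fin k) × Bool) =>
      x.2.2.2.1 := Primrec.fst.comp (Primrec.snd.comp (Primrec.snd.comp Primrec.snd))
  have hdir : Primrec fun x : (Bool × List (Fin k)) × (ℕ × List (Fin k) × List (Fin k) × Bool) =>
      x.2.2.2.2 := Primrec.snd.comp (Primrec.snd.comp (Primrec.snd.comp Primrec.snd))
  have hlr : Primrec fun x : (Bool × List (Fin k)) × (ℕ × List (Fin k) × List (Fin k) × Bool) =>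
      RL.getD x.2.1 ([], []) := (Primrec.list_getD ([], [])).comp (Primrec.const RL) hn
  have hl := Primrec.cond hdir (Primrec.fst.comp hlr) (Primrec.snd.comp hlr)
  have hr := Primrec.cond hdir (Primrec.snd.comp hlr) (Primrec.fst.comp hlr)
  have happ1 := Primrec.list_append.comp hp (Primrec.list_append.comp hl hs')
  have happ2 := Primrec.list_append.comp hp (Primrec.list_append.comp hr hs')
  have hb := (Primrec.dom_bool₂ (· && ·)).comp hst1 (Primrec.eq.comp hst2 happ1).decide
  exact Primrec₂.of_eq (hb.pair happ2).to₂ fun a b => by simp [stepFold]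

theorem certCheck_primrec :
    Primrec fun x : (List (Fin k) × List (Fin k)) × Cert k =>
      certCheck RL x.1.1 x.1.2 x.2 := by
  have hfold : Primrec fun x : (List (Fin k) × List (Fin k)) × Cert k =>
      x.2.foldl (stepFold RL) (true, x.1.1) := by
    have h1 : Primrec fun x : (List (Fin k) × List (Fin k)) × Cert k => x.2 := Primrec.snd
    have h2 : Primrec fun x : (List (Fin k) × List (Fin k)) × Cert k =>
        ((true, x.1.1) : Bool × List (Fin k)) :=
      (Primrec.const true).pair (Primrec.fst.comp Primrec.fst)
    have h3 : Primrec₂ fun (_ : (List (Fin k) × List (Fin k)) × Cert k)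
        (q : (Bool × List (Fin k)) × (ℕ × List (Fin k) × List (Fin k) × Bool)) =>
        stepFold RL q.1 q.2 :=
      ((stepFold_primrec RL).comp (Primrec.fst.comp Primrec.snd)
        (Primrec.snd.comp Primrec.snd)).to₂
    exact (Primrec.list_foldl h1 h2 h3).of_eq fun a => rfl
  exact (Primrec.dom_bool₂ (· && ·)).comp (Primrec.fst.comp hfold)
    (Primrec.eq.comp (Primrec.snd.comp hfold) (Primrec.snd.comp Primrec.fst)).decide

theorem mulf_primrec {α : Type*} [Primcodable α] {sf : α → ℕ} {mf : α → List ℕ}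
    {xf yf : α → ℕ} (hs : Primrec sf) (hm : Primrec mf) (hx : Primrec xf) (hy : Primrec yf) :
    Primrec fun a => mulf (sf a) (mf a) (xf a) (yf a) :=
  (Primrec.list_getD 0).comp hm (Primrec.nat_add.comp (Primrec.nat_mul.comp hx hs) hy)

theorem wordProd_primrec {α : Type*} [Primcodable α] {sf : α → ℕ} {mf gf : α → List ℕ}
    {wf : α → List (Fin k)} (hs : Primrec sf) (hm : Primrec mf) (hg : Primrec gf)
    (hw : Primrec wf) :
    Primrec fun a => wordProd (sf a) (mf a) (gf a) (wf a) := by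
  have hvals : Primrec fun a => (wf a).map (fun x => (gf a).getD x.val 0) :=
    Primrec.list_map hw
      (((Primrec.list_getD 0).comp (hg.comp Primrec.fst)
        (Primrec.fin_val.comp Primrec.snd)).to₂)
  have htail := Primrec.list_tail.comp hvals
  have hheadD := Primrec.option_getD.comp (Primrec.list_head?.comp hvals) (Primrec.const 0)
  have hfold := Primrec.list_foldl htail hheadD
    ((mulf_primrec (hs.comp Primrec.fst) (hm.comp Primrec.fst)
      (Primrec.fst.comp Primrec.snd) (Primrec.snd.comp Primrec.snd)).to₂)
  exact hfold.of_eq fun a => by simp [wordProd, List.headD_eq_head?_getD]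

theorem sgCheck_primrec :
    Primrec fun x : (List (Fin k) × List (Fin k)) × (ℕ × List ℕ × List ℕ) =>
      sgCheck RL x.1.1 x.1.2 x.2 := by
  set α := (List (Fin k) × List (Fin k)) × (ℕ × List ℕ × List ℕ)
  have hu : Primrec fun x : α => x.1.1 := Primrec.fst.comp Primrec.fst
  have hv : Primrec fun x : α => x.1.2 := Primrec.snd.comp Primrec.fst
  have hN : Primrec fun x : α => x.2.1 := Primrec.fst.comp Primrec.snd
  have hs : Primrec fun x : α => x.2.1 + 1 := Primrec.succ.comp hN
  have hm : Primrec fun x : α => x.2.2.1 := Primrec.fst.comp (Primrec.snd.comp Primrec.snd)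
  have hg : Primrec fun x : α => x.2.2.2 := Primrec.snd.comp (Primrec.snd.comp Primrec.snd)
  have hA1 : Primrec fun x : α => x.2.2.2.all fun y => decide (y < x.2.1 + 1) :=
    primrec_list_all hg ((Primrec.nat_lt.comp Primrec.snd (hs.comp Primrec.fst)).decide.to₂)
  have hA2 : Primrec fun x : α => x.2.2.1.all fun y => decide (y < x.2.1 + 1) :=
    primrec_list_all hm ((Primrec.nat_lt.comp Primrec.snd (hs.comp Primrec.fst)).decide.to₂)
  have hA3 : Primrec fun x : α => (List.range (x.2.1 + 1)).all fun a =>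
      (List.range (x.2.1 + 1)).all fun b => (List.range (x.2.1 + 1)).all fun c =>
        decide (mulf (x.2.1 + 1) x.2.2.1 (mulf (x.2.1 + 1) x.2.2.1 a b) c =
          mulf (x.2.1 + 1) x.2.2.1 a (mulf (x.2.1 + 1) x.2.2.1 b c)) := by
    have hs3 : Primrec fun y : ((α × ℕ) × ℕ) × ℕ => y.1.1.1.2.1 + 1 :=
      hs.comp (Primrec.fst.comp (Primrec.fst.comp Primrec.fst))
    have hm3 : Primrec fun y : ((α × ℕ) × ℕ) × ℕ => y.1.1.1.2.2.1 :=
      hm.comp (Primrec.fst.comp (Primrec.fst.comp Primrec.fst))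
    have haP : Primrec fun y : ((α × ℕ) × ℕ) × ℕ => y.1.1.2 :=
      Primrec.snd.comp (Primrec.fst.comp Primrec.fst)
    have hbP : Primrec fun y : ((α × ℕ) × ℕ) × ℕ => y.1.2 := Primrec.snd.comp Primrec.fst
    have hcP : Primrec fun y : ((α × ℕ) × ℕ) × ℕ => y.2 := Primrec.snd
    have hin : Primrec₂ fun (y : (α × ℕ) × ℕ) (c : ℕ) =>
        decide (mulf (y.1.1.2.1 + 1) y.1.1.2.2.1
            (mulf (y.1.1.2.1 + 1) y.1.1.2.2.1 y.1.2 y.2) c =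
          mulf (y.1.1.2.1 + 1) y.1.1.2.2.1 y.1.2
            (mulf (y.1.1.2.1 + 1) y.1.1.2.2.1 y.2 c)) :=
      (Primrec.eq.comp
        (mulf_primrec hs3 hm3 (mulf_primrec hs3 hm3 haP hbP) hcP)
        (mulf_primrec hs3 hm3 haP (mulf_primrec hs3 hm3 hbP hcP))).decide.to₂
    have hmid : Primrec₂ fun (y : α × ℕ) (b : ℕ) =>
        (List.range (y.1.2.1 + 1)).all fun c =>
          decide (mulf (y.1.2.1 + 1) y.1.2.2.1
              (mulf (y.1.2.1 + 1) y.1.2.2.1 y.2 b) c =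
            mulf (y.1.2.1 + 1) y.1.2.2.1 y.2
              (mulf (y.1.2.1 + 1) y.1.2.2.1 b c)) :=
      (primrec_list_all (Primrec.list_range.comp (hs.comp (Primrec.fst.comp Primrec.fst)))
        hin).to₂
    have houter : Primrec₂ fun (x : α) (a : ℕ) =>
        (List.range (x.2.1 + 1)).all fun b => (List.range (x.2.1 + 1)).all fun c =>
          decide (mulf (x.2.1 + 1) x.2.2.1 (mulf (x.2.1 + 1) x.2.2.1 a b) c =
            mulf (x.2.1 + 1) x.2.2.1 a (mulf (x.2.1 + 1) x.2.2.1 b c)) :=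
      (primrec_list_all (Primrec.list_range.comp (hs.comp Primrec.fst)) hmid).to₂
    exact primrec_list_all (Primrec.list_range.comp hs) houter
  have hA4 : Primrec fun x : α => RL.all fun lr =>
      decide (wordProd (x.2.1 + 1) x.2.2.1 x.2.2.2 lr.1 =
        wordProd (x.2.1 + 1) x.2.2.1 x.2.2.2 lr.2) :=
    primrec_list_all (Primrec.const RL)
      ((Primrec.eq.comp
        (wordProd_primrec (hs.comp Primrec.fst) (hm.comp Primrec.fst) (hg.comp Primrec.fst)
          (Primrec.fst.comp Primrec.snd))
        (wordProd_primrec (hs.comp Primrec.fst) (hm.comp Primrec.fst) (hg.comp Primrec.fst)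
          (Primrec.snd.comp Primrec.snd))).decide.to₂)
  have hA5 : Primrec fun x : α => !decide (wordProd (x.2.1 + 1) x.2.2.1 x.2.2.2 x.1.1 =
      wordProd (x.2.1 + 1) x.2.2.1 x.2.2.2 x.1.2) :=
    Primrec.not.comp (Primrec.eq.comp (wordProd_primrec hs hm hg hu)
      (wordProd_primrec hs hm hg hv)).decide
  have hand := (Primrec.dom_bool₂ (· && ·)).comp
    ((Primrec.dom_bool₂ (· && ·)).comp
      ((Primrec.dom_bool₂ (· && ·)).comp
        ((Primrec.dom_bool₂ (· && ·)).comp hA1 hA2) hA3) hA4) hA5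
  exact hand.of_eq fun x => rfl

def sdecode (k : ℕ) (e : ℕ) : Option (Cert k ⊕ (ℕ × List ℕ × List ℕ)) :=
  @Encodable.decode _ (Primcodable.toEncodable) e

def sencode (x : Cert k ⊕ (ℕ × List ℕ × List ℕ)) : ℕ :=
  @Encodable.encode _ (Primcodable.toEncodable) x

theorem sdecode_sencode (x : Cert k ⊕ (ℕ × List ℕ × List ℕ)) :
    sdecode k (sencode x) = some x :=
  Encodable.encodek x

def checker (p : List (Fin k) × List (Fin k)) (e : ℕ) : Option Bool :=
  Option.elim (sdecode k e) none
    (Sum.elim (fun c => bif certCheck RL p.1 p.2 c then some true else none)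
      (fun t => bif sgCheck RL p.1 p.2 t then some false else none))

theorem checker_primrec : Primrec₂ (checker RL) := by
  have hdec : Primrec fun x : (List (Fin k) × List (Fin k)) × ℕ =>
      sdecode k x.2 := Primrec.decode.comp Primrec.snd
  have hc1 : Primrec fun z : ((List (Fin k) × List (Fin k)) × ℕ) × Cert k =>
      (bif certCheck RL z.1.1.1 z.1.1.2 z.2 then some true else none : Option Bool) :=
    Primrec.cond ((certCheck_primrec RL).comp
        ((Primrec.fst.comp Primrec.fst).pair Primrec.snd))
      (Primrec.const (some true)) (Primrec.const none)
  have hc2 : Primrec fun z : ((List (Fin k) × List (Fin k)) × ℕ) × (ℕ × List ℕ × List ℕ) =>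
      (bif sgCheck RL z.1.1.1 z.1.1.2 z.2 then some false else none : Option Bool) :=
    Primrec.cond ((sgCheck_primrec RL).comp
        ((Primrec.fst.comp Primrec.fst).pair Primrec.snd))
      (Primrec.const (some false)) (Primrec.const none)
  have hbranch : Primrec₂ fun (x : (List (Fin k) × List (Fin k)) × ℕ)
      (y : Cert k ⊕ (ℕ × List ℕ × List ℕ)) =>
      (Sum.casesOn y
        (fun c => bif certCheck RL x.1.1 x.1.2 c then some true else none)
        (fun t => bif sgCheck RL x.1.1 x.1.2 t then some false else none) : Option Bool) :=
    Primrec.sumCasesOn Primrec.snd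
      (hc1.comp ((Primrec.fst.comp Primrec.fst).pair Primrec.snd)).to₂
      (hc2.comp ((Primrec.fst.comp Primrec.fst).pair Primrec.snd)).to₂
  have h := Primrec.option_casesOn hdec (Primrec.const (none : Option Bool)) hbranch
  have h2 : Primrec fun x : (List (Fin k) × List (Fin k)) × ℕ => checker RL x.1 x.2 :=
    h.of_eq fun x => by
      unfold checker
      rcases sdecode k x.2 with _ | (c | t) <;> rfl
  exact h2.to₂

end Comp

end McKinsey

/-- McKinsey's algorithm: a finitely presented semigroup (presented by finitely
many relations `R` over a finite alphabet, equality being the congruence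
generated by `R`) which is residually finite has decidable (computable) word
problem. -/
theorem mckinsey_word_problem_decidable (k : ℕ)
    (R : Finset (List (Fin k) × List (Fin k)))
    (hR : ∀ p ∈ R, p.1 ≠ ([] : List (Fin k)) ∧ p.2 ≠ ([] : List (Fin k)))
    (hrf : ∀ u v : List (Fin k), u ≠ [] → v ≠ [] →
      ¬ Relation.EqvGen (RwStep (↑R : Set (List (Fin k) × List (Fin k)))) u v →
      ∃ (N : ℕ) (mul : Fin (N + 1) → Fin (N + 1) → Fin (N + 1))
        (φ : List (Fin k) → Fin (N + 1)),
        (∀ a b c, mul (mul a b) c = mul a (mul b c)) ∧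
        (∀ a b : List (Fin k), a ≠ [] → b ≠ [] → φ (a ++ b) = mul (φ a) (φ b)) ∧
        (∀ a b : List (Fin k),
          Relation.EqvGen (RwStep (↑R : Set (List (Fin k) × List (Fin k)))) a b →
            φ a = φ b) ∧
        (∀ t : Fin (N + 1), ∃ a : List (Fin k), a ≠ [] ∧ φ a = t) ∧
        φ u ≠ φ v) :
    ComputablePred fun p : List (Fin k) × List (Fin k) =>
      Relation.EqvGen (RwStep (↑R : Set (List (Fin k) × List (Fin k)))) p.1 p.2 := by
  classical
  set RL := R.toList with hRLdef
  have hRL1 : ∀ lr ∈ RL, lr ∈ R := fun lr h => (Finset.mem_toList).1 h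
  have hRL2 : ∀ lr ∈ R, lr ∈ RL := fun lr h => (Finset.mem_toList).2 h
  rw [ComputablePred.computable_iff]
  refine ⟨fun p => decide (Relation.EqvGen
    (RwStep (↑R : Set (List (Fin k) × List (Fin k)))) p.1 p.2), ?_, by
      funext p; simp⟩
  have hcond : Primrec fun p : List (Fin k) × List (Fin k) =>
      (decide (p.1 = []) || decide (p.2 = [])) :=
    (Primrec.dom_bool₂ (· || ·)).comp
      (Primrec.eq.comp Primrec.fst (Primrec.const [])).decide
      (Primrec.eq.comp Primrec.snd (Primrec.const [])).decide
  have hsomeP : Primrec fun p : List (Fin k) × List (Fin k) => decide (p.1 = p.2) :=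
    (Primrec.eq.comp Primrec.fst Primrec.snd).decide
  have hsome : Partrec fun p : List (Fin k) × List (Fin k) =>
      (Part.some (decide (p.1 = p.2)) : Part Bool) := hsomeP.to_comp.partrec
  have hrfind : Partrec fun p : List (Fin k) × List (Fin k) =>
      Nat.rfindOpt (McKinsey.checker RL p) :=
    Partrec.rfindOpt (McKinsey.checker_primrec RL).to_comp.to₂
  have hF : Partrec fun p : List (Fin k) × List (Fin k) =>
      (bif (decide (p.1 = []) || decide (p.2 = [])) then
        (Part.some (decide (p.1 = p.2)) : Part Bool) else
        Nat.rfindOpt (McKinsey.checker RL p)) :=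
    Partrec.cond hcond.to_comp hsome hrfind
  apply Partrec.of_eq_tot hF
  rintro ⟨u, v⟩
  simp only
  by_cases hue : u = []
  · have hb : (decide (u = []) || decide (v = [])) = true := by simp [hue]
    rw [hb, cond_true]
    rw [Part.mem_some_iff]
    subst hue
    rcases eq_or_ne v [] with rfl | hv
    · simp [Relation.EqvGen.refl]
    · have hne : ¬ Relation.EqvGen (RwStep (↑R : Set (List (Fin k) × List (Fin k)))) [] v :=
        fun h => hv ((McKinsey.eqv_empty_iff R hR h).1 rfl)
      simp [hne, Ne.symm hv]
  · by_cases hve : v = []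
    · have hb : (decide (u = []) || decide (v = [])) = true := by simp [hve]
      rw [hb, cond_true]
      rw [Part.mem_some_iff]
      subst hve
      have hne : ¬ Relation.EqvGen (RwStep (↑R : Set (List (Fin k) × List (Fin k)))) u [] :=
        fun h => hue ((McKinsey.eqv_empty_iff R hR h).2 rfl)
      simp [hne, hue]
    · have hb : (decide (u = []) || decide (v = [])) = false := by simp [hue, hve]
      rw [hb, cond_false]
      have hdom : (Nat.rfindOpt (McKinsey.checker RL (u, v))).Dom := by
        rw [Nat.rfindOpt_dom]
        by_cases heqv : Relation.EqvGen
            (RwStep (↑R : Set (List (Fin k) × List (Fin k)))) u v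
        · obtain ⟨c, hc⟩ := McKinsey.certCheck_complete R RL hRL2 heqv
          have hck : McKinsey.checker RL (u, v) (McKinsey.sencode (k := k) (Sum.inl c)) = some true := by
            unfold McKinsey.checker
            rw [McKinsey.sdecode_sencode]
            simp [hc]
          exact ⟨McKinsey.sencode (k := k) (Sum.inl c), true, Option.mem_def.2 hck⟩
        · obtain ⟨N, mul, φ, h1, h2, h3, _, h5⟩ := hrf u v hue hve heqv
          obtain ⟨t, ht⟩ := McKinsey.sgCheck_complete R RL hRL1 hR hue hve N mul φ h1 h2 h3 h5
          have hck : McKinsey.checker RL (u, v) (McKinsey.sencode (k := k) (Sum.inr t)) = some false := by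
            unfold McKinsey.checker
            rw [McKinsey.sdecode_sencode]
            simp [ht]
          exact ⟨McKinsey.sencode (k := k) (Sum.inr t), false, Option.mem_def.2 hck⟩
      have hval := Part.get_mem hdom
      obtain ⟨n, hn⟩ := Nat.rfindOpt_spec hval
      have hbval : (Nat.rfindOpt (McKinsey.checker RL (u, v))).get hdom =
          decide (Relation.EqvGen (RwStep (↑R : Set (List (Fin k) × List (Fin k)))) u v) := by
        have key : ∀ bb : Bool, bb ∈ McKinsey.checker RL (u, v) n →
            bb = decide (Relation.EqvGen
              (RwStep (↑R : Set (List (Fin k) × List (Fin k)))) u v) := by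
          intro bb hbb
          unfold McKinsey.checker at hbb
          rcases hd : McKinsey.sdecode k n with _ | (c | t) <;> rw [hd] at hbb
          · simp at hbb
          · simp only [Option.elim, Sum.elim_inl] at hbb
            rcases hcc : McKinsey.certCheck RL u v c with _ | _ <;> rw [hcc] at hbb
            · simp at hbb
            · simp only [cond_true, Option.mem_def, Option.some_inj] at hbb
              have hs := McKinsey.certCheck_sound R RL hRL1 hcc
              rw [← hbb]
              simp [hs]
          · simp only [Option.elim, Sum.elim_inr] at hbb
            rcases hcc : McKinsey.sgCheck RL u v t with _ | _ <;> rw [hcc] at hbb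
            · simp at hbb
            · simp only [cond_true, Option.mem_def, Option.some_inj] at hbb
              have hs := McKinsey.sgCheck_sound R RL hRL2 hR hcc
              rw [← hbb]
              simp [hs]
        exact key _ hn
      rw [← hbval]
      exact hval
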